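/- For ordered dissections A, B of [1,d], one has A ≤ B in the dominance order if and only if B = R(A) for some finite product R of simple raising operators R_{i,s}. -/

import Mathlib

/-- An ordered dissection of `{0,…,d-1}` (indexed from 0): a sequence of pairwise
disjoint subsets, vanishing from index `d` on, whose union is everything. -/
def IsDissection (d : ℕ) (A : ℕ → Finset (Fin d)) : Prop :=
  (∀ i j, i ≠ j → Disjoint (A i) (A j)) ∧ (∀ k, d ≤ k → A k = ∅) ∧
    ∀ s : Fin d, ∃ i, s ∈ A i

/-- Dominance order on ordered dissections: each initial union of components of `A`
is contained in the corresponding one of `B`. -/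
def DomD {d : ℕ} (A B : ℕ → Finset (Fin d)) : Prop :=
  ∀ i : ℕ, (Finset.range (i + 1)).biUnion A ⊆ (Finset.range (i + 1)).biUnion B

/-- `eps A s` is the index of the component of `A` containing `s`
(the least such index; it is unique for a dissection). -/
noncomputable def eps {d : ℕ} (A : ℕ → Finset (Fin d)) (s : Fin d) : ℕ :=
  open scoped Classical in
  if h : ∃ i, s ∈ A i then Nat.find h else 0

/-- The simple raising operator `R_{i,s}`: move `s` into component `i`
if `eps A s > i`, otherwise do nothing. -/
noncomputable def Rop {d : ℕ} (i : ℕ) (s : Fin d) (A : ℕ → Finset (Fin d)) : ℕ → Finset (Fin d) :=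
  if eps A s ≤ i then A
  else fun k =>
    if k = i then insert s (A k) else if k = eps A s then (A k).erase s else A k

/-- `φ(A)`: the tuple of component cardinalities. -/
def phi {d : ℕ} (A : ℕ → Finset (Fin d)) : ℕ → ℤ :=
  fun k => ((A k).card : ℤ)

/-- Dominance order on integer tuples: all partial sums of `l` at most those of `m`. -/
def Dom (l m : ℕ → ℤ) : Prop :=
  ∀ i : ℕ, ∑ k ∈ Finset.range (i + 1), l k ≤ ∑ k ∈ Finset.range (i + 1), m k

section Aux
variable {d : ℕ} {A B : ℕ → Finset (Fin d)}

lemma eps_spec (hA : IsDissection d A) (s : Fin d) : s ∈ A (eps A s) := by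
  have h := hA.2.2 s
  unfold eps
  rw [dif_pos h]
  exact Nat.find_spec h

lemma mem_iff_eps (hA : IsDissection d A) (s : Fin d) (k : ℕ) :
    s ∈ A k ↔ eps A s = k := by
  constructor
  · intro hk
    by_contra hne
    exact Finset.disjoint_left.mp (hA.1 _ _ hne) (eps_spec hA s) hk
  · rintro rfl; exact eps_spec hA s

lemma eps_lt (hA : IsDissection d A) (s : Fin d) : eps A s < d := by
  by_contra h
  push_neg at h
  have := eps_spec hA s
  rw [hA.2.1 _ h] at this
  simp at this

lemma domD_iff (hA : IsDissection d A) (hB : IsDissection d B) :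
    DomD A B ↔ ∀ s, eps B s ≤ eps A s := by
  constructor
  · intro h s
    have hs : s ∈ (Finset.range (eps A s + 1)).biUnion A := by
      simp only [Finset.mem_biUnion, Finset.mem_range]
      exact ⟨_, Nat.lt_succ_self _, eps_spec hA s⟩
    have := h _ hs
    simp only [Finset.mem_biUnion, Finset.mem_range] at this
    obtain ⟨k, hk, hsk⟩ := this
    rw [mem_iff_eps hB] at hsk
    omega
  · intro h i t ht
    simp only [Finset.mem_biUnion, Finset.mem_range] at ht ⊢
    obtain ⟨k, hk, htk⟩ := ht
    rw [mem_iff_eps hA] at htk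
    exact ⟨eps B t, by have := h t; omega, eps_spec hB t⟩

lemma eq_of_eps (hA : IsDissection d A) (hB : IsDissection d B)
    (h : ∀ s, eps A s = eps B s) : A = B := by
  funext k
  ext t
  rw [mem_iff_eps hA, mem_iff_eps hB, h]

lemma Rop_mem (hA : IsDissection d A) {i : ℕ} {s : Fin d} (hi : i < eps A s)
    (t : Fin d) (k : ℕ) :
    t ∈ Rop i s A k ↔ (t = s ∧ k = i) ∨ (t ≠ s ∧ t ∈ A k) := by
  unfold Rop
  rw [if_neg (by omega)]
  by_cases hts : t = s
  · subst hts
    by_cases hki : k = i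
    · subst hki; simp
    · rw [if_neg hki]
      by_cases hke : k = eps A t
      · subst hke; simp [hki]
      · rw [if_neg hke]
        simp only [hki, and_false, false_or, ne_eq, not_true_eq_false, false_and, iff_false]
        intro hmem
        exact hke ((mem_iff_eps hA t k).mp hmem).symm
  · by_cases hki : k = i
    · subst hki; simp [hts, Finset.mem_insert]
    · rw [if_neg hki]
      by_cases hke : k = eps A s
      · subst hke; simp [hts, Finset.mem_erase]
      · rw [if_neg hke]; simp [hts, hki]

lemma Rop_dissection (hA : IsDissection d A) {i : ℕ} {s : Fin d} (hi : i < eps A s)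
    (hid : i < d) : IsDissection d (Rop i s A) := by
  refine ⟨?_, ?_, ?_⟩
  · intro k j hkj
    rw [Finset.disjoint_left]
    intro t htk htj
    rw [Rop_mem hA hi] at htk htj
    rcases htk with ⟨rfl, rfl⟩ | ⟨hts, htk⟩
    · rcases htj with ⟨_, rfl⟩ | ⟨hts, _⟩
      · exact hkj rfl
      · exact hts rfl
    · rcases htj with ⟨rfl, rfl⟩ | ⟨_, htj⟩
      · exact hts rfl
      · exact Finset.disjoint_left.mp (hA.1 _ _ hkj) htk htj
  · intro k hk
    ext t
    simp only [Finset.notMem_empty, iff_false, Rop_mem hA hi]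
    rintro (⟨rfl, rfl⟩ | ⟨_, htk⟩)
    · omega
    · rw [hA.2.1 _ hk] at htk; simp at htk
  · intro t
    by_cases hts : t = s
    · exact ⟨i, by rw [Rop_mem hA hi]; left; exact ⟨hts, rfl⟩⟩
    · exact ⟨eps A t, by rw [Rop_mem hA hi]; right; exact ⟨hts, eps_spec hA t⟩⟩

lemma Rop_eps (hA : IsDissection d A) {i : ℕ} {s : Fin d} (hi : i < eps A s)
    (hid : i < d) (t : Fin d) :
    eps (Rop i s A) t = if t = s then i else eps A t := by
  have hA' := Rop_dissection hA hi hid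
  by_cases hts : t = s
  · subst hts
    rw [if_pos rfl, ← mem_iff_eps hA', Rop_mem hA hi]
    left; exact ⟨rfl, rfl⟩
  · rw [if_neg hts, ← mem_iff_eps hA', Rop_mem hA hi]
    right; exact ⟨hts, eps_spec hA t⟩

lemma Rop_dom (X : ℕ → Finset (Fin d)) (i : ℕ) (s : Fin d) :
    DomD X (Rop i s X) := by
  by_cases h : eps X s ≤ i
  · unfold Rop; rw [if_pos h]; intro j; exact subset_rfl
  · have hex : ∃ j, s ∈ X j := by
      by_contra hne
      have : eps X s = 0 := by unfold eps; rw [dif_neg hne]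
      omega
    have hse : s ∈ X (eps X s) := by
      unfold eps; rw [dif_pos hex]; exact Nat.find_spec hex
    intro j t ht
    simp only [Finset.mem_biUnion, Finset.mem_range] at ht ⊢
    obtain ⟨k, hk, htk⟩ := ht
    unfold Rop
    rw [if_neg h]
    by_cases hts : t = s
    · subst hts
      have hek : eps X t ≤ k := by
        unfold eps; rw [dif_pos hex]; exact Nat.find_min' hex htk
      exact ⟨i, by omega, by simp⟩
    · refine ⟨k, hk, ?_⟩
      by_cases hki : k = i
      · subst hki; simp [htk]
      · rw [if_neg hki]
        by_cases hke : k = eps X s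
        · subst hke; simp [hts, htk]
        · rw [if_neg hke]; exact htk

lemma domD_trans {C : ℕ → Finset (Fin d)} (h1 : DomD A B) (h2 : DomD B C) : DomD A C :=
  fun i => (h1 i).trans (h2 i)

lemma forward_aux (hB : IsDissection d B) :
    ∀ n A, IsDissection d A → DomD A B → (∑ s : Fin d, eps A s) = n →
      Relation.ReflTransGen (fun X Y => ∃ (i : ℕ) (s : Fin d), Y = Rop i s X) A B := by
  intro n
  induction n using Nat.strong_induction_on with
  | _ n ih =>
    intro A hA hAB hn
    by_cases hEq : ∀ s, eps A s = eps B s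
    · rw [eq_of_eps hA hB hEq]
    · push_neg at hEq
      obtain ⟨s, hs⟩ := hEq
      have hle := (domD_iff hA hB).mp hAB
      have hlt : eps B s < eps A s := lt_of_le_of_ne (hle s) (Ne.symm hs)
      set i := eps B s with hi
      have hid : i < d := eps_lt hB s
      have hA' := Rop_dissection hA hlt hid
      have heps := Rop_eps hA hlt hid
      have hdom' : DomD (Rop i s A) B := by
        rw [domD_iff hA' hB]
        intro t
        rw [heps t]
        by_cases hts : t = s
        · subst hts; simp [hi]
        · rw [if_neg hts]; exact hle t
      have hsum : (∑ t : Fin d, eps (Rop i s A) t) < n := by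
        rw [← hn]
        refine Finset.sum_lt_sum ?_ ⟨s, Finset.mem_univ s, ?_⟩
        · intro t _
          rw [heps t]
          by_cases hts : t = s
          · rw [if_pos hts]; subst hts; omega
          · rw [if_neg hts]
        · rw [heps s, if_pos rfl]; omega
      exact Relation.ReflTransGen.head ⟨i, s, rfl⟩
        (ih _ hsum _ hA' hdom' rfl)

end Aux

/-- `A ≤ B` in the dominance order on ordered dissections iff `B` is obtained from `A`
by a finite product of simple raising operators `R_{i,s}`. -/
theorem stmt5 (d : ℕ) (A B : ℕ → Finset (Fin d))
    (hA : IsDissection d A) (hB : IsDissection d B) :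
    DomD A B ↔
      Relation.ReflTransGen (fun X Y => ∃ (i : ℕ) (s : Fin d), Y = Rop i s X) A B := by
  constructor
  · intro h
    exact forward_aux hB _ A hA h rfl
  · intro h
    clear hA hB
    induction h with
    | refl => intro j; exact subset_rfl
    | tail _ step ih =>
      obtain ⟨i, s, rfl⟩ := step
      exact domD_trans ih (Rop_dom _ i s)
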